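/- Define trigonometric polynomials P_n : ℝ → ℂ by P_{−1} ≡ 0, P₀ ≡ 1 and P_{n+1}(k) = P_n(k) + p(λⁿk)·P_{n−1}(k) for n ≥ 0. Then for all n ≥ 1 and all k ∈ ℝ: (1) B⁽ⁿ⁾(k) = [[P_n(k), P_{n−1}(k)], [p(k)·P_{n−1}(λk), p(k)·P_{n−2}(λk)]]; (2) consequently ‖B⁽ⁿ⁾(k)‖_F² = |P_n(k)|² + |P_{n−1}(k)|² + |p(k)|²·(|P_{n−1}(λk)|² + |P_{n−2}(λk)|²); and (3) for all n ≥ 0 and k ∈ ℝ, P_{n+1}(k/λ) = P_n(k) + p(k)·P_{n−1}(λk). -/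

import Mathlib

open Filter

/-- The Perron–Frobenius eigenvalue `λ = (1+√13)/2` of `M = [[1,1],[3,0]]`. -/
noncomputable def lam : ℝ := (1 + Real.sqrt 13) / 2

/-- `p(k) = e^{2πikλ} + e^{2πik(λ+1)} + e^{2πik(λ+2)}`. -/
noncomputable def pfun (k : ℝ) : ℂ :=
  Complex.exp (((2 * Real.pi * k * lam : ℝ) : ℂ) * Complex.I) +
  Complex.exp (((2 * Real.pi * k * (lam + 1) : ℝ) : ℂ) * Complex.I) +
  Complex.exp (((2 * Real.pi * k * (lam + 2) : ℝ) : ℂ) * Complex.I)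

/-- The Fourier matrix `B(k) = [[1,1],[p(k),0]]`. -/
noncomputable def Bmat (k : ℝ) : Matrix (Fin 2) (Fin 2) ℂ :=
  !![1, 1; pfun k, 0]

/-- The outward matrix product `B⁽ⁿ⁾(k) = B(k)·B(λk)·…·B(λⁿ⁻¹k)`. -/
noncomputable def Bout (k : ℝ) : ℕ → Matrix (Fin 2) (Fin 2) ℂ
  | 0 => 1
  | n + 1 => Bout k n * Bmat (lam ^ n * k)

/-- The squared Frobenius norm of a complex 2×2 matrix. -/
noncomputable def frobSq (M : Matrix (Fin 2) (Fin 2) ℂ) : ℝ :=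
  ∑ i : Fin 2, ∑ j : Fin 2, ‖M i j‖ ^ 2

/-- The shifted family of trigonometric polynomials: `Pm n = P_{n−1}`, so that
`Pm 0 = P_{−1} ≡ 0`, `Pm 1 = P₀ ≡ 1`, and
`Pm (n+2) k = P_{n+1}(k) = P_n(k) + p(λⁿk)·P_{n−1}(k) = Pm (n+1) k + p(λⁿk)·Pm n k`. -/
noncomputable def Pm : ℕ → ℝ → ℂ
  | 0, _ => 0
  | 1, _ => 1
  | n + 2, k => Pm (n + 1) k + pfun (lam ^ n * k) * Pm n k

lemma lam_pos : 0 < lam := by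
  have := Real.sqrt_nonneg 13
  unfold lam; linarith

lemma boutFormula : ∀ m : ℕ, ∀ k : ℝ, Bout k (m + 1) =
    !![Pm (m + 2) k, Pm (m + 1) k;
       pfun k * Pm (m + 1) (lam * k), pfun k * Pm m (lam * k)] := by
  intro m
  induction m with
  | zero =>
    intro k
    show Bout k 0 * Bmat (lam ^ 0 * k) = _
    simp [Bout, Bmat, Pm]
  | succ m ih =>
    intro k
    show Bout k (m + 1) * Bmat (lam ^ (m + 1) * k) = _
    rw [ih k, Bmat, Matrix.mul_fin_two]
    have h1 : lam ^ (m + 1) * k = lam ^ m * (lam * k) := by ring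
    have e1 : Pm (m + 1 + 2) k = Pm (m + 2) k + Pm (m + 1) k * pfun (lam ^ (m + 1) * k) := by
      show Pm (m + 2) k + pfun (lam ^ (m + 1) * k) * Pm (m + 1) k = _; ring
    have e2 : pfun k * Pm (m + 2) (lam * k) =
        pfun k * Pm (m + 1) (lam * k) + pfun k * Pm m (lam * k) * pfun (lam ^ (m + 1) * k) := by
      show pfun k * (Pm (m + 1) (lam * k) + pfun (lam ^ m * (lam * k)) * Pm m (lam * k)) = _
      rw [← h1]; ring
    rw [e1, e2]
    norm_num

lemma keyIdent : ∀ n : ℕ, ∀ k : ℝ,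
    Pm (n + 2) k = Pm (n + 1) (lam * k) + pfun (lam * k) * Pm n (lam * (lam * k)) := by
  have H : ∀ n : ℕ, (∀ k : ℝ,
      Pm (n + 2) k = Pm (n + 1) (lam * k) + pfun (lam * k) * Pm n (lam * (lam * k))) ∧
      (∀ k : ℝ, Pm (n + 3) k = Pm (n + 2) (lam * k) + pfun (lam * k) * Pm (n + 1) (lam * (lam * k))) := by
    intro n
    induction n with
    | zero =>
      constructor
      · intro k; simp [Pm]
      · intro k
        show Pm 2 k + pfun (lam ^ 1 * k) * Pm 1 k = _
        have : Pm 2 (lam * k) = 1 := by simp [Pm]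
        simp [Pm, this, pow_one]
    | succ n ih =>
      obtain ⟨h1, h2⟩ := ih
      refine ⟨h2, fun k => ?_⟩
      show Pm (n + 3) k + pfun (lam ^ (n + 2) * k) * Pm (n + 2) k = _
      rw [h2 k, h1 k]
      have ha : Pm (n + 2 + 1) (lam * k) =
          Pm (n + 2) (lam * k) + pfun (lam ^ (n + 1) * (lam * k)) * Pm (n + 1) (lam * k) := rfl
      have hb : Pm (n + 2) (lam * (lam * k)) =
          Pm (n + 1) (lam * (lam * k)) + pfun (lam ^ n * (lam * (lam * k))) * Pm n (lam * (lam * k)) := rfl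
      have c1 : lam ^ (n + 1) * (lam * k) = lam ^ (n + 2) * k := by ring
      have c2 : lam ^ n * (lam * (lam * k)) = lam ^ (n + 2) * k := by ring
      rw [ha, hb, c1, c2]; ring
  exact fun n => (H n).1

/-- With `P_{−1} ≡ 0`, `P₀ ≡ 1` and `P_{n+1}(k) = P_n(k) + p(λⁿk)·P_{n−1}(k)`
(encoded as `P_n = Pm (n+1)`), for all `n ≥ 1` and all `k ∈ ℝ`:
(1) `B⁽ⁿ⁾(k) = [[P_n(k), P_{n−1}(k)],[p(k)·P_{n−1}(λk), p(k)·P_{n−2}(λk)]]`;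
(2) `‖B⁽ⁿ⁾(k)‖_F² = |P_n(k)|² + |P_{n−1}(k)|² + |p(k)|²·(|P_{n−1}(λk)|² + |P_{n−2}(λk)|²)`;
and (3) for all `n ≥ 0` and `k ∈ ℝ`, `P_{n+1}(k/λ) = P_n(k) + p(k)·P_{n−1}(λk)`. -/
theorem stmt10 :
    (∀ n : ℕ, 1 ≤ n → ∀ k : ℝ,
      Bout k n =
        !![Pm (n + 1) k, Pm n k;
           pfun k * Pm n (lam * k), pfun k * Pm (n - 1) (lam * k)] ∧
      frobSq (Bout k n) =
        ‖Pm (n + 1) k‖ ^ 2 + ‖Pm n k‖ ^ 2 +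
          ‖pfun k‖ ^ 2 *
            (‖Pm n (lam * k)‖ ^ 2 +
              ‖Pm (n - 1) (lam * k)‖ ^ 2)) ∧
    (∀ n : ℕ, ∀ k : ℝ,
      Pm (n + 2) (k / lam) = Pm (n + 1) k + pfun k * Pm n (lam * k)) := by
  constructor
  · intro n hn k
    obtain ⟨m, rfl⟩ : ∃ m, n = m + 1 := ⟨n - 1, by omega⟩
    have hB := boutFormula m k
    have hm : m + 1 - 1 = m := rfl
    refine ⟨by rw [hB, hm], ?_⟩
    rw [hB, hm, frobSq]
    simp [Fin.sum_univ_two, map_mul, mul_pow]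
    ring
  · intro n k
    have h := keyIdent n (k / lam)
    have hl : lam ≠ 0 := ne_of_gt lam_pos
    have e1 : lam * (k / lam) = k := by field_simp
    rw [h, e1]
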